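/- Let M be a commutative idempotent monoid acting additively on an abelian group G, F : M → G a function satisfying the chain rule, and X_1, …, X_n ∈ M. Then the following are equivalent: (1) X_1, …, X_n form an F-Markov chain; (2) X_{[n]∖W}.F(;_{w∈W} X_w) = 0 for every nonempty W ⊆ [n] that does not consist only of consecutive integers (i.e. W is not an interval {i, i+1, …, k}). -/

import Mathlib

namespace AMRF
/-- An additive monoid action of a commutative monoid `M` on an abelian group `G`. -/
structure MAction (M G : Type*) [CommMonoid M] [AddCommGroup G] where
  act : M → G → G
  act_one : ∀ g, act 1 g = g
  act_mul : ∀ X Y g, act X (act Y g) = act (X * Y) g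
  act_add : ∀ X g h, act X (g + h) = act X g + act X h

variable {M G : Type*} [CommMonoid M] [AddCommGroup G]

/-- `F : M → G` satisfies the chain rule `F(XY) = F(X) + X.F(Y)`. -/
def ChainRule (A : MAction M G) (F : M → G) : Prop :=
  ∀ X Y : M, F (X * Y) = F X + A.act X (F Y)

/-- Higher-order terms on a *reversed* argument list: the head of the list is the *last*
argument `Y_q` in `F_q(Y₁; …; Y_q)`. -/
def Fseq (A : MAction M G) (F : M → G) : List M → G
  | [] => 0
  | [Y] => F Y
  | Y :: Z :: l => Fseq A F (Z :: l) - A.act Y (Fseq A F (Z :: l))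

/-- `Fof A F [Y₁, …, Y_q] = F_q(Y₁; …; Y_q)`, defined inductively by
`F_q(Y₁; …; Y_q) = F_{q−1}(Y₁; …; Y_{q−1}) − Y_q.F_{q−1}(Y₁; …; Y_{q−1})`. -/
def Fof (A : MAction M G) (F : M → G) (l : List M) : G :=
  Fseq A F l.reverse

/-- The interaction term `F(;_{i∈I} X_i)`, with arguments in increasing index order. -/
def Fint (A : MAction M G) (F : M → G) {ι : Type*} [LinearOrder ι] (X : ι → M)
    (I : Finset ι) : G :=
  Fof A F ((I.sort (· ≤ ·)).map X)

/-- The `F`-independence relation: `X ⊥_F Y | Z` iff `Z.F(X; Y) = 0`, where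
`F(X; Y) = F(X) − Y.F(X)` is the second-order term. -/
def Findep (A : MAction M G) (F : M → G) (X Y Z : M) : Prop :=
  A.act Z (F X - A.act Y (F X)) = 0

/-- `X₁, …, X_n` form an `F`-Markov chain: `Xᵢ ⊥_F X_{[i−2]} | X_{i−1}` for all `2 ≤ i ≤ n`
(with `0`-based indices: for consecutive `j + 1 = i`, `Xᵢ` is `F`-independent of the product
of all `X_k` with `k < j`, given `X_j`). -/
def FMarkovChain (A : MAction M G) (F : M → G) {n : ℕ} (X : Fin n → M) : Prop :=
  ∀ i j : Fin n, (j : ℕ) + 1 = (i : ℕ) →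
    Findep A F (X i) (∏ k ∈ Finset.univ.filter (fun k => k < j), X k) (X j)

section Helpers

variable (A : MAction M G) (F : M → G)

/-- The action as an additive monoid hom. -/
def actHom (Z : M) : G →+ G := AddMonoidHom.mk' (A.act Z) (A.act_add Z)

@[simp] lemma actHom_apply (Z : M) (g : G) : actHom A Z g = A.act Z g := rfl

variable {n : ℕ} (X : Fin n → M)

/-- Product of the variables over an index set. -/
def XP (S : Finset (Fin n)) : M := ∏ a ∈ S, X a

/-- `F` of the product over an index set. -/
def ff (S : Finset (Fin n)) : G := F (XP X S)

/-- The conditional interaction sum. -/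
def mu (Y V : Finset (Fin n)) : G :=
  ∑ S ∈ V.powerset, ((-1 : ℤ) ^ S.card) • ff F X (Y ∪ S)

variable {A F X}
variable (hidem : ∀ x : M, x * x = x) (hF : ChainRule A F)

include hidem in
lemma XP_union (S T : Finset (Fin n)) : XP X (S ∪ T) = XP X S * XP X T := by
  classical
  simp only [XP]
  induction S using Finset.induction_on with
  | empty => simp
  | @insert a S ha ih =>
    by_cases hB : a ∈ T
    · have h1 : insert a S ∪ T = S ∪ T := by
        ext x
        simp only [Finset.mem_union, Finset.mem_insert]
        constructor
        · rintro ((rfl | h) | h)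
          exacts [Or.inr hB, Or.inl h, Or.inr h]
        · tauto
      have h2 : X a * ∏ x ∈ T, X x = ∏ x ∈ T, X x := by
        rw [← Finset.mul_prod_erase T X hB, ← mul_assoc, hidem]
      rw [h1, ih, Finset.prod_insert ha, mul_assoc, mul_left_comm, h2]
    · have h1 : insert a S ∪ T = insert a (S ∪ T) := by
        rw [Finset.insert_union]
      have ha2 : a ∉ S ∪ T := by simp [ha, hB]
      rw [h1, Finset.prod_insert ha2, ih, Finset.prod_insert ha, mul_assoc]

include hF in
lemma ff_empty : ff F X ∅ = 0 := by
  have h := hF 1 1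
  rw [one_mul, A.act_one] at h
  have h0 : F (1 : M) = 0 := by
    have := left_eq_add.mp h
    exact this
  simp only [ff, XP, Finset.prod_empty]
  exact h0

include hidem hF in
lemma act_ff (B S : Finset (Fin n)) :
    A.act (XP X B) (ff F X S) = ff F X (B ∪ S) - ff F X B := by
  have h := hF (XP X B) (XP X S)
  rw [← XP_union hidem] at h
  simp only [ff]
  rw [eq_comm, sub_eq_iff_eq_add, add_comm]
  exact h

lemma mu_empty (Y : Finset (Fin n)) : mu F X Y ∅ = ff F X Y := by
  simp [mu]

lemma mu_insert {z : Fin n} {V : Finset (Fin n)} (hz : z ∉ V) (Y : Finset (Fin n)) :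
    mu F X Y (insert z V) = mu F X Y V - mu F X (Y ∪ {z}) V := by
  classical
  unfold mu
  rw [Finset.sum_powerset_insert hz, sub_eq_add_neg, ← Finset.sum_neg_distrib]
  congr 1
  refine Finset.sum_congr rfl fun S hS => ?_
  have hzS : z ∉ S := fun h => hz (Finset.mem_powerset.mp hS h)
  have hc : (insert z S).card = S.card + 1 := Finset.card_insert_of_notMem hzS
  have hset : Y ∪ insert z S = (Y ∪ {z}) ∪ S := by
    ext x
    simp only [Finset.mem_union, Finset.mem_insert, Finset.mem_singleton]
    tauto
  rw [hc, hset, pow_succ, mul_neg_one, neg_smul]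

lemma mu_singleton (Y : Finset (Fin n)) (a : Fin n) :
    mu F X Y {a} = ff F X Y - ff F X (Y ∪ {a}) := by
  classical
  have : ({a} : Finset (Fin n)) = insert a ∅ := rfl
  rw [this, mu_insert (Finset.notMem_empty a), mu_empty, mu_empty]
  rfl

include hidem hF in
lemma act_mu {V : Finset (Fin n)} (hV : V.Nonempty) (B Y : Finset (Fin n)) :
    A.act (XP X B) (mu F X Y V) = mu F X (B ∪ Y) V := by
  classical
  have : A.act (XP X B) (mu F X Y V) = actHom A (XP X B) (mu F X Y V) := rfl
  rw [this]
  unfold mu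
  rw [map_sum]
  have : ∀ S ∈ V.powerset,
      actHom A (XP X B) (((-1 : ℤ) ^ S.card) • ff F X (Y ∪ S))
        = ((-1 : ℤ) ^ S.card) • ff F X ((B ∪ Y) ∪ S) - ((-1 : ℤ) ^ S.card) • ff F X B := by
    intro S hS
    rw [map_zsmul, actHom_apply, act_ff hidem hF, ← Finset.union_assoc, smul_sub]
  rw [Finset.sum_congr rfl this, Finset.sum_sub_distrib, ← Finset.sum_smul,
    Finset.sum_powerset_neg_one_pow_card_of_nonempty hV, zero_smul, sub_zero]

lemma act_neg (Z : M) (g : G) : A.act Z (-g) = - A.act Z g :=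
  (actHom A Z).map_neg g

lemma act_sub (Z : M) (g h : G) : A.act Z (g - h) = A.act Z g - A.act Z h :=
  (actHom A Z).map_sub g h

lemma mu_expand_cond : ∀ {D V : Finset (Fin n)}, Disjoint D V → ∀ Y : Finset (Fin n),
    mu F X Y V = ∑ E ∈ D.powerset, mu F X (Y ∪ (D \ E)) (V ∪ E) := by
  classical
  intro D
  induction D using Finset.induction_on with
  | empty => intro V _ Y; simp
  | @insert z D hz ih =>
    intro V hDV Y
    obtain ⟨hzV, hDV'⟩ := Finset.disjoint_insert_left.mp hDV
    have hzD' : Disjoint D (insert z V) := by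
      rw [Finset.disjoint_insert_right]
      exact ⟨hz, hDV'⟩
    have key : mu F X Y V = mu F X (Y ∪ {z}) V + mu F X Y (insert z V) := by
      rw [mu_insert hzV]; abel
    rw [key, ih hDV' (Y ∪ {z}), ih hzD' Y, Finset.sum_powerset_insert hz]
    congr 1
    · refine Finset.sum_congr rfl fun E hE => ?_
      have hED := Finset.mem_powerset.mp hE
      have hzE : z ∉ E := fun h => hz (hED h)
      have h1 : Y ∪ {z} ∪ (D \ E) = Y ∪ (insert z D \ E) := by
        ext x
        simp only [Finset.mem_union, Finset.mem_sdiff, Finset.mem_singleton, Finset.mem_insert]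
        have : x = z → x ∉ E := fun h => h ▸ hzE
        tauto
      rw [h1]
    · refine Finset.sum_congr rfl fun E hE => ?_
      have hED := Finset.mem_powerset.mp hE
      have h1 : Y ∪ (D \ E) = Y ∪ (insert z D \ insert z E) := by
        ext x
        simp only [Finset.mem_union, Finset.mem_sdiff, Finset.mem_insert]
        have : x ∈ D → x ≠ z := fun h hx => hz (hx ▸ h)
        tauto
      have h2 : insert z V ∪ E = V ∪ insert z E := by
        ext x
        simp only [Finset.mem_union, Finset.mem_insert]
        tauto
      rw [h1, h2]

lemma mu_expand_int : ∀ {R V : Finset (Fin n)}, Disjoint R V → ∀ Y : Finset (Fin n),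
    mu F X Y (V ∪ R) = ∑ E ∈ R.powerset, ((-1 : ℤ) ^ E.card) • mu F X (Y ∪ E) V := by
  classical
  intro R
  induction R using Finset.induction_on with
  | empty => simp
  | @insert z R hz ih =>
    intro V hRV Y
    obtain ⟨hzV, hRV'⟩ := Finset.disjoint_insert_left.mp hRV
    have hzVR : z ∉ V ∪ R := by simp [hzV, hz]
    have h1 : V ∪ insert z R = insert z (V ∪ R) := by
      ext x; simp only [Finset.mem_union, Finset.mem_insert]; tauto
    rw [h1, mu_insert hzVR, ih hRV' Y, ih hRV' (Y ∪ {z}), Finset.sum_powerset_insert hz,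
      sub_eq_add_neg, ← Finset.sum_neg_distrib]
    congr 1
    refine Finset.sum_congr rfl fun E hE => ?_
    have hEC := Finset.mem_powerset.mp hE
    have hzE : z ∉ E := fun h => hz (hEC h)
    have hc : (insert z E).card = E.card + 1 := Finset.card_insert_of_notMem hzE
    have hset : Y ∪ insert z E = Y ∪ {z} ∪ E := by
      ext x
      simp only [Finset.mem_union, Finset.mem_insert, Finset.mem_singleton]
      tauto
    rw [hc, hset, pow_succ, mul_neg_one, neg_smul]

lemma mu_block (Y : Finset (Fin n)) (x y : Fin n) :
    mu F X Y {x} + mu F X (Y ∪ {x}) {y} = mu F X Y {y} + mu F X (Y ∪ {y}) {x} := by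
  simp only [mu_singleton]
  have h : (Y ∪ {x}) ∪ {y} = (Y ∪ {y}) ∪ {x} := Finset.union_right_comm Y {x} {y}
  rw [h]; abel

lemma sort_insert_max {a : Fin n} {s : Finset (Fin n)} (h : ∀ x ∈ s, x < a) :
    (insert a s).sort (· ≤ ·) = s.sort (· ≤ ·) ++ [a] := by
  classical
  have ha : a ∉ s := fun hs => lt_irrefl a (h a hs)
  have hperm : List.Perm ((insert a s).sort (· ≤ ·)) (s.sort (· ≤ ·) ++ [a]) := by
    refine (Finset.sort_perm_toList _ _).trans ?_
    refine (Finset.toList_insert ha).trans ?_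
    refine (List.Perm.cons a (Finset.sort_perm_toList s (· ≤ ·)).symm).trans ?_
    exact (List.perm_append_singleton a _).symm
  refine List.Perm.eq_of_pairwise' (r := (· ≤ ·)) (Finset.pairwise_sort _ _) ?_ hperm
  refine List.pairwise_append.mpr ⟨Finset.pairwise_sort _ _, List.pairwise_singleton _ a, ?_⟩
  intro x hx y hy
  rw [List.mem_singleton] at hy
  subst hy
  exact (h x ((Finset.mem_sort (α := Fin n) (· ≤ ·)).mp hx)).le

include hidem hF in
lemma Fint_eq (W : Finset (Fin n)) : Fint A F X W = - mu F X ∅ W := by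
  classical
  induction W using Finset.induction_on_max with
  | empty => simp [Fint, Fof, Fseq, mu_empty, ff_empty hF]
  | insert a I hlt ih =>
    have ha : a ∉ I := fun h => lt_irrefl a (hlt a h)
    have hs := sort_insert_max hlt
    rcases I.eq_empty_or_nonempty with rfl | hne
    · have : Fint A F X (insert a ∅) = F (X a) := by
        simp [Fint, Fof, hs, Fseq]
      rw [this]
      have h1 : (insert a ∅ : Finset (Fin n)) = ({a} : Finset (Fin n)) := rfl
      rw [h1, mu_singleton, ff_empty hF, Finset.empty_union]
      have : ff F X {a} = F (X a) := by simp [ff, XP]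
      rw [this]; abel
    · obtain ⟨Y0, l, hYl⟩ : ∃ Y0 l, ((I.sort (· ≤ ·)).map X).reverse = Y0 :: l := by
        obtain ⟨x, hx⟩ := hne
        have hnil : I.sort (· ≤ ·) ≠ [] :=
          List.ne_nil_of_mem ((Finset.mem_sort (α := Fin n) (· ≤ ·)).mpr hx)
        refine List.exists_cons_of_ne_nil ?_
        simp only [ne_eq, List.reverse_eq_nil_iff, List.map_eq_nil_iff]
        exact hnil
      have h1 : Fint A F X (insert a I) = Fint A F X I - A.act (X a) (Fint A F X I) := by
        have e : Fint A F X (insert a I)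
            = Fseq A F ((((I.sort (· ≤ ·)).map X) ++ [X a]).reverse) := by
          simp only [Fint, Fof, hs, List.map_append, List.map_cons, List.map_nil]
        rw [e]
        simp only [List.reverse_append, List.reverse_cons, List.reverse_nil, List.nil_append,
          List.singleton_append]
        rw [hYl]
        have h2 : Fint A F X I = Fseq A F (Y0 :: l) := by
          show Fseq A F (((I.sort (· ≤ ·)).map X).reverse) = _
          rw [hYl]
        rw [h2]
        rfl
      rw [h1, ih, act_neg, mu_insert ha ∅]
      have h3 : A.act (X a) (mu F X ∅ I) = mu F X ({a} : Finset (Fin n)) I := by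
        have hXa : X a = XP X {a} := by simp [XP]
        rw [hXa, act_mu hidem hF hne]
        rw [Finset.union_empty]
      rw [h3]
      have h4 : (∅ ∪ {a} : Finset (Fin n)) = ({a} : Finset (Fin n)) := Finset.empty_union _
      rw [h4]
      abel

include hidem hF in
lemma act_sdiff_Fint {W : Finset (Fin n)} (hW : W.Nonempty) :
    A.act (∏ a ∈ Finset.univ \ W, X a) (Fint A F X W)
      = - mu F X (Finset.univ \ W) W := by
  have h0 : (∏ a ∈ Finset.univ \ W, X a) = XP X (Finset.univ \ W) := rfl
  rw [h0, Fint_eq hidem hF, act_neg, act_mu hidem hF hW, Finset.union_empty]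

include hidem hF in
lemma findep_eq (i j : Fin n) :
    A.act (X j) (F (X i) - A.act (∏ k ∈ Finset.univ.filter (fun k => k < j), X k) (F (X i)))
      = mu F X ({j} ∪ Finset.univ.filter (fun k => k < j)) {i} - mu F X {j} {i} := by
  classical
  have hXi : F (X i) = ff F X {i} := by simp [ff, XP]
  have hXj : X j = XP X ({j} : Finset (Fin n)) := by simp [XP]
  have hXL : (∏ k ∈ Finset.univ.filter (fun k => k < j), X k)
      = XP X (Finset.univ.filter (fun k => k < j)) := rfl
  rw [hXi, hXj, hXL, act_ff hidem hF, act_sub, act_sub, act_ff hidem hF, act_ff hidem hF,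
    act_ff hidem hF, mu_singleton, mu_singleton]
  have h1 : ({j} : Finset (Fin n)) ∪ (Finset.univ.filter (fun k => k < j) ∪ {i})
      = ({j} ∪ Finset.univ.filter (fun k => k < j)) ∪ {i} := (Finset.union_assoc _ _ _).symm
  rw [h1]
  abel

include hidem hF in
lemma pairGM_of_markov (hM : FMarkovChain A F X) {t g a : Fin n} {Z : Finset (Fin n)}
    (htg : t < g) (hga : g < a) (hgZ : g ∈ Z) : mu F X Z (insert t {a}) = 0 := by
  classical
  suffices key : ∀ d : ℕ, ∀ g a : Fin n, ∀ Z : Finset (Fin n), t < g →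
      (g : ℕ) + d + 1 = (a : ℕ) → g ∈ Z → mu F X Z (insert t {a}) = 0 by
    have hlt : (g : ℕ) < (a : ℕ) := hga
    exact key ((a : ℕ) - (g : ℕ) - 1) g a Z htg (by omega) hgZ
  intro d
  induction d using Nat.strong_induction_on with
  | _ d ih =>
    intro g a Z htg hd hgZ
    have hta : (t : ℕ) < (a : ℕ) := by
      have : (t : ℕ) < (g : ℕ) := htg
      omega
    have htna : t ∉ ({a} : Finset (Fin n)) := by
      simp only [Finset.mem_singleton]
      exact fun h => absurd (congrArg (Fin.val) h) (by omega)
    rw [mu_insert htna, sub_eq_zero]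
    -- goal : mu F X Z {a} = mu F X (Z ∪ {t}) {a}
    match d, hd, ih with
    | 0, hd, ih =>
      -- base case : a = g + 1
      have hMar : A.act (X g) (F (X a)
          - A.act (∏ k ∈ Finset.univ.filter (fun k => k < g), X k) (F (X a))) = 0 :=
        hM a g (by omega)
      rw [findep_eq hidem hF] at hMar
      have hMu : mu F X ({g} ∪ Finset.univ.filter (fun k => k < g)) {a} = mu F X {g} {a} :=
        sub_eq_zero.mp hMar
      have K1 : ∀ B : Finset (Fin n),
          mu F X (B ∪ ({g} ∪ Finset.univ.filter (fun k => k < g))) {a}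
            = mu F X (B ∪ {g}) {a} := by
        intro B
        have hane : ({a} : Finset (Fin n)).Nonempty := Finset.singleton_nonempty a
        calc mu F X (B ∪ ({g} ∪ Finset.univ.filter (fun k => k < g))) {a}
            = A.act (XP X B) (mu F X ({g} ∪ Finset.univ.filter (fun k => k < g)) {a}) :=
              (act_mu hidem hF hane B _).symm
          _ = A.act (XP X B) (mu F X {g} {a}) := by rw [hMu]
          _ = mu F X (B ∪ {g}) {a} := act_mu hidem hF hane B _
      have e1 : mu F X (Z ∪ ({g} ∪ Finset.univ.filter (fun k => k < g))) {a}
          = mu F X Z {a} := by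
        rw [K1 Z]
        congr 1
        rw [Finset.union_eq_left]
        simpa using hgZ
      have e2 : mu F X ((Z ∪ {t}) ∪ ({g} ∪ Finset.univ.filter (fun k => k < g))) {a}
          = mu F X (Z ∪ {t}) {a} := by
        rw [K1 (Z ∪ {t})]
        congr 1
        ext x
        simp only [Finset.mem_union, Finset.mem_singleton]
        have : x = g → x ∈ Z := fun h => h ▸ hgZ
        tauto
      have e3 : (Z ∪ {t}) ∪ ({g} ∪ Finset.univ.filter (fun k => k < g))
          = Z ∪ ({g} ∪ Finset.univ.filter (fun k => k < g)) := by
        ext x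
        simp only [Finset.mem_union, Finset.mem_singleton, Finset.mem_filter, Finset.mem_univ,
          true_and]
        have : x = t → x < g := fun h => h ▸ htg
        tauto
      rw [← e1, ← e2, e3]
    | (d' + 1), hd, ih =>
      have han : (a : ℕ) - 1 < n := by
        have := a.isLt
        omega
      set a' : Fin n := ⟨(a : ℕ) - 1, han⟩ with ha'
      have hga' : (g : ℕ) + d' + 1 = (a' : ℕ) := by simp [ha']; omega
      have hta' : t < a' := by
        have h1 : (t : ℕ) < (g : ℕ) := htg
        show (t : ℕ) < (a' : ℕ)
        simp [ha']; omega
      have ha'a : (a' : ℕ) + 0 + 1 = (a : ℕ) := by simp [ha']; omega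
      have conv : ∀ (Y : Finset (Fin n)) (x : Fin n), t ∉ ({x} : Finset (Fin n)) →
          mu F X Y (insert t {x}) = 0 → mu F X (Y ∪ {t}) {x} = mu F X Y {x} := by
        intro Y x hx h
        rw [mu_insert hx] at h
        exact (sub_eq_zero.mp h).symm
      have htna' : t ∉ ({a'} : Finset (Fin n)) := by
        simp only [Finset.mem_singleton]
        exact ne_of_lt hta'
      have IH1 := ih d' (Nat.lt_succ_self _) g a' Z htg hga' hgZ
      have IH2 := ih d' (Nat.lt_succ_self _) g a' (Z ∪ {a}) htg hga'
        (Finset.mem_union_left _ hgZ)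
      have IH3 := ih 0 (Nat.succ_pos _) a' a (Z ∪ {a'}) hta' ha'a
        (Finset.mem_union_right _ (Finset.mem_singleton_self a'))
      have c1 := conv Z a' htna' IH1
      have c2 := conv (Z ∪ {a}) a' htna' IH2
      have c3 := conv (Z ∪ {a'}) a htna IH3
      have block1 := mu_block (F := F) (X := X) (Z ∪ {t}) a' a
      have block2 := mu_block (F := F) (X := X) Z a' a
      have s1 : (Z ∪ {t}) ∪ {a'} = (Z ∪ {a'}) ∪ {t} := Finset.union_right_comm Z {t} {a'}
      have s2 : (Z ∪ {t}) ∪ {a} = (Z ∪ {a}) ∪ {t} := Finset.union_right_comm Z {t} {a}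
      rw [s1, s2, c3, c2, c1] at block1
      have hfin : mu F X Z {a} + mu F X (Z ∪ {a}) {a'}
          = mu F X (Z ∪ {t}) {a} + mu F X (Z ∪ {a}) {a'} := by
        rw [← block2, block1]
      exact add_right_cancel hfin

include hidem hF in
lemma pairGM_of_rhs
    (h2 : ∀ W : Finset (Fin n), W.Nonempty →
        ¬ (∀ a ∈ W, ∀ b ∈ W, ∀ c : Fin n, a ≤ c → c ≤ b → c ∈ W) →
        A.act (∏ a ∈ Finset.univ \ W, X a) (Fint A F X W) = 0)
    {t g a : Fin n} {Z : Finset (Fin n)} (htg : t < g) (hga : g < a) (hgZ : g ∈ Z) :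
    mu F X Z (insert t {a}) = 0 := by
  classical
  have hta : (t : ℕ) < (a : ℕ) := lt_trans htg hga
  have htnea : t ≠ a := fun h => absurd (congrArg Fin.val h) (by omega)
  have htna : t ∉ ({a} : Finset (Fin n)) := by
    simp only [Finset.mem_singleton]; exact htnea
  by_cases htZ : t ∈ Z
  · rw [mu_insert htna]
    have hZt : Z ∪ {t} = Z := by
      rw [Finset.union_eq_left]; simpa using htZ
    rw [hZt, sub_self]
  · by_cases haZ : a ∈ Z
    · rw [mu_insert htna, mu_singleton, mu_singleton]
      have e1 : Z ∪ {a} = Z := by rw [Finset.union_eq_left]; simpa using haZ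
      have e2 : (Z ∪ {t}) ∪ {a} = Z ∪ {t} := by
        rw [Finset.union_eq_left]
        intro x hx
        rw [Finset.mem_singleton] at hx; subst hx
        exact Finset.mem_union_left _ haZ
      rw [e1, e2]
      abel
    · have hDV : Disjoint (Finset.univ \ (Z ∪ insert t {a})) (insert t {a}) := by
        rw [Finset.disjoint_left]
        intro x hx hxV
        exact (Finset.mem_sdiff.mp hx).2 (Finset.mem_union_right _ hxV)
      rw [mu_expand_cond hDV Z]
      apply Finset.sum_eq_zero
      intro E hE
      have hED : E ⊆ Finset.univ \ (Z ∪ insert t {a}) := Finset.mem_powerset.mp hE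
      have hsub : ∀ x, x ∈ E → x ∉ Z ∪ insert t {a} := fun x hx =>
        (Finset.mem_sdiff.mp (hED hx)).2
      have hset : Z ∪ ((Finset.univ \ (Z ∪ insert t {a})) \ E)
          = Finset.univ \ (insert t {a} ∪ E) := by
        ext x
        constructor
        · intro hx
          refine Finset.mem_sdiff.mpr ⟨Finset.mem_univ x, ?_⟩
          intro hxVE
          rcases Finset.mem_union.mp hx with hxZ | hxDE
          · rcases Finset.mem_union.mp hxVE with hxV | hxE
            · rcases Finset.mem_insert.mp hxV with rfl | hxa
              · exact htZ hxZ
              · rw [Finset.mem_singleton] at hxa; subst hxa; exact haZ hxZ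
            · exact hsub x hxE (Finset.mem_union_left _ hxZ)
          · obtain ⟨hxD, hxE⟩ := Finset.mem_sdiff.mp hxDE
            rcases Finset.mem_union.mp hxVE with hxV | hxE'
            · exact (Finset.mem_sdiff.mp hxD).2 (Finset.mem_union_right _ hxV)
            · exact hxE hxE'
        · intro hx
          obtain ⟨-, hxn⟩ := Finset.mem_sdiff.mp hx
          by_cases hxZ : x ∈ Z
          · exact Finset.mem_union_left _ hxZ
          · refine Finset.mem_union_right _ (Finset.mem_sdiff.mpr ⟨?_, ?_⟩)
            · refine Finset.mem_sdiff.mpr ⟨Finset.mem_univ x, ?_⟩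
              intro hc
              rcases Finset.mem_union.mp hc with h | h
              · exact hxZ h
              · exact hxn (Finset.mem_union_left _ h)
            · exact fun hxE => hxn (Finset.mem_union_right _ hxE)
        
      rw [hset]
      have hW'ne : (insert t {a} ∪ E).Nonempty :=
        ⟨t, Finset.mem_union_left _ (Finset.mem_insert_self _ _)⟩
      have hgW' : g ∉ insert t {a} ∪ E := by
        intro hg
        rcases Finset.mem_union.mp hg with hg | hg
        · rcases Finset.mem_insert.mp hg with hg | hg
          · exact absurd (congrArg Fin.val hg) (by have := (htg : (t:ℕ) < g); omega)
          · rw [Finset.mem_singleton] at hg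
            exact absurd (congrArg Fin.val hg) (by have := (hga : (g:ℕ) < a); omega)
        · exact hsub g hg (Finset.mem_union_left _ hgZ)
      have hni : ¬ (∀ a' ∈ insert t {a} ∪ E, ∀ b' ∈ insert t {a} ∪ E, ∀ c : Fin n,
          a' ≤ c → c ≤ b' → c ∈ insert t {a} ∪ E) := by
        intro hall
        exact hgW' (hall t (Finset.mem_union_left _ (Finset.mem_insert_self _ _))
          a (Finset.mem_union_left _ (Finset.mem_insert_of_mem (Finset.mem_singleton_self a)))
          g htg.le hga.le)
      have hz := h2 (insert t {a} ∪ E) hW'ne hni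
      rw [act_sdiff_Fint hidem hF hW'ne] at hz
      exact neg_eq_zero.mp hz

end Helpers

/-- `X₁, …, X_n` form an `F`-Markov chain if and only if
`X_{[n]∖W}.F(;_{w∈W} X_w) = 0` for every nonempty `W ⊆ [n]` that is not an interval of
consecutive numbers. -/
theorem F_markov_chain_characterization
    {M G : Type*} [CommMonoid M] [AddCommGroup G]
    (hidem : ∀ x : M, x * x = x)
    (A : MAction M G) (F : M → G) (hF : ChainRule A F)
    (n : ℕ) (X : Fin n → M) :
    FMarkovChain A F X ↔
      ∀ W : Finset (Fin n), W.Nonempty →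
        ¬ (∀ a ∈ W, ∀ b ∈ W, ∀ c : Fin n, a ≤ c → c ≤ b → c ∈ W) →
        A.act (∏ a ∈ Finset.univ \ W, X a) (Fint A F X W) = 0 := by
  classical
  constructor
  · intro hM W hW hni
    push_neg at hni
    obtain ⟨a0, ha0, b0, hb0, c0, hac, hcb, hc0⟩ := hni
    have hac' : a0 < c0 := lt_of_le_of_ne hac (fun h => hc0 (h ▸ ha0))
    have hcb' : c0 < b0 := lt_of_le_of_ne hcb (fun h => hc0 (h.symm ▸ hb0))
    rw [act_sdiff_Fint hidem hF hW, neg_eq_zero]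
    have hVW : insert a0 {b0} ⊆ W := by
      intro x hx
      rcases Finset.mem_insert.mp hx with rfl | hx
      · exact ha0
      · rw [Finset.mem_singleton] at hx; subst hx; exact hb0
    have hdisj : Disjoint (W \ insert a0 {b0}) (insert a0 {b0}) := Finset.sdiff_disjoint
    have hWV : insert a0 {b0} ∪ (W \ insert a0 {b0}) = W := Finset.union_sdiff_of_subset hVW
    have hc0W : c0 ∈ Finset.univ \ W := Finset.mem_sdiff.mpr ⟨Finset.mem_univ _, hc0⟩
    calc mu F X (Finset.univ \ W) W
        = mu F X (Finset.univ \ W) (insert a0 {b0} ∪ (W \ insert a0 {b0})) := by rw [hWV]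
      _ = ∑ E ∈ (W \ insert a0 {b0}).powerset,
            ((-1 : ℤ) ^ E.card) • mu F X ((Finset.univ \ W) ∪ E) (insert a0 {b0}) :=
          mu_expand_int hdisj _
      _ = 0 := by
          apply Finset.sum_eq_zero
          intro E hE
          rw [pairGM_of_markov hidem hF hM hac' hcb' (Finset.mem_union_left _ hc0W), smul_zero]
  · intro h2 i j hji
    show A.act (X j) (F (X i)
      - A.act (∏ k ∈ Finset.univ.filter (fun k => k < j), X k) (F (X i))) = 0
    rw [findep_eq hidem hF, sub_eq_zero]
    have hji' : j < i := by
      rw [Fin.lt_def]; omega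
    have main : ∀ B : Finset (Fin n), (∀ b ∈ B, b < j) →
        mu F X ({j} ∪ B) {i} = mu F X {j} {i} := by
      intro B
      induction B using Finset.induction_on with
      | empty => intro _; rw [Finset.union_empty]
      | @insert t B ht ih =>
        intro hB
        have htj : t < j := hB t (Finset.mem_insert_self _ _)
        have hBj : ∀ b ∈ B, b < j := fun b hb => hB b (Finset.mem_insert_of_mem hb)
        have hp : mu F X ({j} ∪ B) (insert t {i}) = 0 :=
          pairGM_of_rhs hidem hF h2 htj hji'
            (Finset.mem_union_left _ (Finset.mem_singleton_self j))
        have hti : t ∉ ({i} : Finset (Fin n)) := by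
          simp only [Finset.mem_singleton]
          exact ne_of_lt (htj.trans hji')
        rw [mu_insert hti] at hp
        have heq := sub_eq_zero.mp hp
        have hset : ({j} ∪ B) ∪ {t} = {j} ∪ insert t B := by
          ext x
          simp only [Finset.mem_union, Finset.mem_singleton, Finset.mem_insert]
          tauto
        calc mu F X ({j} ∪ insert t B) {i}
            = mu F X (({j} ∪ B) ∪ {t}) {i} := by rw [hset]
          _ = mu F X ({j} ∪ B) {i} := heq.symm
          _ = mu F X {j} {i} := ih hBj
    exact main (Finset.univ.filter (fun k => k < j)) (fun b hb => (Finset.mem_filter.mp hb).2)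


end AMRF
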